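/- Let A be a finite-dimensional commutative R-algebra with nondegenerate form ⟨a,b⟩ = L(ab), let f ∈ A with f^{ℓ+1} = 0 and define K_m := Ann_A(f) ∩ (f^{m-1}) for m ≥ 1. Then the orthogonal complement of K_m with respect to ⟨ , ⟩ equals the ideal (f) + Ann_A(f^{m-1}). -/

import Mathlib

open LinearMap

/-- For `K_m = Ann_A(f) ∩ (f^{m-1})` in a finite-dimensional commutative ℝ-algebra with
nondegenerate form `⟨a,b⟩ = L(ab)` and `f` nilpotent (`f^{ℓ+1} = 0`), the orthogonal
complement of `K_m` is `(f) + Ann_A(f^{m-1})`. -/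
theorem stmt_3 (A : Type*) [CommRing A] [Algebra ℝ A] [FiniteDimensional ℝ A]
    (L : A →ₗ[ℝ] ℝ) (hnd : ∀ a : A, (∀ b : A, L (a * b) = 0) → a = 0)
    (f : A) (ℓ : ℕ) (hf : f ^ (ℓ + 1) = 0) (m : ℕ) (hm : 1 ≤ m) :
    {a : A | ∀ x : A, x * f = 0 → x ∈ Ideal.span {f ^ (m - 1)} → L (a * x) = 0} =
    {a : A | ∃ b c : A, c * f ^ (m - 1) = 0 ∧ a = b * f + c} := by
  classical
  set g : A := f ^ (m - 1) with hg
  set B : LinearMap.BilinForm ℝ A := (LinearMap.mul ℝ A).compr₂ L with hBdef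
  have hB : ∀ x y : A, B x y = L (x * y) := fun x y => rfl
  have hrefl : B.IsRefl := by
    intro x y h
    rw [hB, mul_comm]
    exact h
  have hndB : B.Nondegenerate := by
    refine ⟨fun a ha => hnd a fun b => ha b, fun a ha => hnd a fun b => ?_⟩
    rw [mul_comm]; exact ha b
  -- orthogonal of a principal ideal (range of mulLeft) is the annihilator (kernel of mulLeft)
  have orth_range : ∀ c : A,
      B.orthogonal (LinearMap.range (LinearMap.mulLeft ℝ c)) =
        LinearMap.ker (LinearMap.mulLeft ℝ c) := by
    intro c
    ext a
    rw [LinearMap.BilinForm.mem_orthogonal_iff, LinearMap.mem_ker]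
    constructor
    · intro h
      have : c * a = 0 := by
        apply hnd
        intro y
        have := h (c * y) ⟨y, rfl⟩
        rw [hB] at this
        rw [show c * a * y = c * y * a by ring]
        exact this
      simpa using this
    · intro hca n hn
      obtain ⟨y, rfl⟩ := hn
      rw [hB]
      simp only [LinearMap.mulLeft_apply] at hca ⊢
      rw [show c * y * a = c * a * y by ring, hca, zero_mul, map_zero]
  -- orthogonal of an annihilator is the principal ideal
  have orth_ker : ∀ c : A,
      B.orthogonal (LinearMap.ker (LinearMap.mulLeft ℝ c)) =
        LinearMap.range (LinearMap.mulLeft ℝ c) := by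
    intro c
    rw [← orth_range c]
    exact LinearMap.BilinForm.orthogonal_orthogonal hndB hrefl _
  -- orthogonal of a sup is the inf of orthogonals
  have orth_sup : ∀ U V : Submodule ℝ A,
      B.orthogonal (U ⊔ V) = B.orthogonal U ⊓ B.orthogonal V := by
    intro U V
    apply le_antisymm
    · exact le_inf (B.orthogonal_le le_sup_left) (B.orthogonal_le le_sup_right)
    · intro a ha n hn
      obtain ⟨u, hu, v, hv, rfl⟩ := Submodule.mem_sup.mp hn
      have h1 := ha.1 u hu
      have h2 := ha.2 v hv
      rw [map_add, LinearMap.add_apply, h1, h2, add_zero]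
  set K1 : Submodule ℝ A := LinearMap.ker (LinearMap.mulLeft ℝ f)
  set Rg : Submodule ℝ A := LinearMap.range (LinearMap.mulLeft ℝ g)
  set R1 : Submodule ℝ A := LinearMap.range (LinearMap.mulLeft ℝ f)
  set Kg : Submodule ℝ A := LinearMap.ker (LinearMap.mulLeft ℝ g)
  have key : B.orthogonal (K1 ⊓ Rg) = R1 ⊔ Kg := by
    have h1 : K1 ⊓ Rg = B.orthogonal (R1 ⊔ Kg) := by
      rw [orth_sup, orth_range f, orth_ker g]
    rw [h1]
    exact LinearMap.BilinForm.orthogonal_orthogonal hndB hrefl _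
  ext a
  simp only [Set.mem_setOf_eq]
  constructor
  · intro h
    have ha : a ∈ B.orthogonal (K1 ⊓ Rg) := by
      intro n hn
      have hn1 : n * f = 0 := by
        have h' : LinearMap.mulLeft ℝ f n = 0 := hn.1
        rw [LinearMap.mulLeft_apply] at h'
        rw [mul_comm]; exact h'
      obtain ⟨y, hy⟩ := hn.2
      rw [LinearMap.mulLeft_apply] at hy
      have hnspan : n ∈ Ideal.span {g} := by
        rw [Ideal.mem_span_singleton]
        exact ⟨y, hy.symm⟩
      have := h n hn1 hnspan
      rw [hB, mul_comm]
      exact this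
    rw [key] at ha
    obtain ⟨u, hu, v, hv, huv⟩ := Submodule.mem_sup.mp ha
    obtain ⟨b, hb⟩ := hu
    rw [LinearMap.mem_ker, LinearMap.mulLeft_apply] at hv
    refine ⟨b, v, by rw [mul_comm]; exact hv, ?_⟩
    rw [LinearMap.mulLeft_apply] at hb
    rw [← huv, ← hb, mul_comm]
  · rintro ⟨b, c, hc, rfl⟩
    intro x hx hxspan
    obtain ⟨y, hy⟩ := Ideal.mem_span_singleton.mp hxspan
    rw [add_mul]
    have h1 : L (b * f * x) = 0 := by
      rw [show b * f * x = b * (x * f) by ring, hx, mul_zero, map_zero]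
    have h2 : L (c * x) = 0 := by
      rw [hy, show c * (g * y) = (c * g) * y by ring, hc, zero_mul, map_zero]
    rw [map_add, h1, h2, add_zero]
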